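/- Let X = (X_1,...,X_n) and Y = (Y_1,...,Y_n) be sequences of real random variables whose entries almost surely have no ties. Then the following are equivalent: (i) the law of Y is a rearrangement of the law of X; (ii) the descending arrangements agree in distribution: Y↓ =d X↓; (iii) the ascending arrangements agree in distribution: Y↑ =d X↑; (iv) the law of Y is a rearrangement of the law of X↓. -/

import Mathlib

open MeasureTheory

/-- A law `ν` on `ℝ^n` is a *rearrangement* of a law `lam` on `ℝ^n`. -/
def IsRearrangement (n : ℕ) (lam nu : Measure (Fin n → ℝ)) : Prop :=
  ∃ (Ω : Type) (_ : MeasurableSpace Ω) (P : Measure Ω),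
    IsProbabilityMeasure P ∧
    ∃ (X : Ω → Fin n → ℝ) (σ : Ω → Equiv.Perm (Fin n)),
      Measurable X ∧ (∀ s : Equiv.Perm (Fin n), MeasurableSet {ω | σ ω = s}) ∧
      P.map X = lam ∧ P.map (fun ω i => X ω (σ ω i)) = nu

/-- The ascending arrangement of a tuple: its entries listed in increasing order. -/
noncomputable def ascArr (n : ℕ) (a : Fin n → ℝ) : Fin n → ℝ := a ∘ Tuple.sort a

/-- The descending arrangement of a tuple: its entries listed in decreasing order. -/
noncomputable def descArr (n : ℕ) (a : Fin n → ℝ) : Fin n → ℝ := fun i => ascArr n a i.rev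

open ProbabilityTheory

variable {n : ℕ}


variable {n : ℕ}

noncomputable def dperm (a : Fin n → ℝ) : Equiv.Perm (Fin n) :=
  (Fin.revPerm).trans (Tuple.sort a)

lemma descArr_apply (a : Fin n → ℝ) (i : Fin n) : descArr n a i = a (dperm a i) := rfl

lemma apply_dperm_inv (a : Fin n → ℝ) (i : Fin n) :
    a i = descArr n a ((dperm a)⁻¹ i) := by
  rw [descArr_apply, Equiv.Perm.inv_def, Equiv.apply_symm_apply]

lemma measurableSet_sort_eq (s : Equiv.Perm (Fin n)) :
    MeasurableSet {a : Fin n → ℝ | Tuple.sort a = s} := by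
  have h : {a : Fin n → ℝ | Tuple.sort a = s}
      = (⋂ (i) (j) (_ : i ≤ j), {a : Fin n → ℝ | a (s i) ≤ a (s j)})
        ∩ ⋂ (i) (j) (_ : i < j) (_ : ¬ s i < s j), {a : Fin n → ℝ | a (s i) = a (s j)}ᶜ := by
    ext a
    simp only [Set.mem_setOf_eq, Set.mem_inter_iff, Set.mem_iInter, Set.mem_compl_iff]
    rw [eq_comm, Tuple.eq_sort_iff]
    constructor
    · rintro ⟨h1, h2⟩
      exact ⟨fun i j hij => h1 hij, fun i j hij hn heq => hn (h2 i j hij heq)⟩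
    · rintro ⟨h1, h2⟩
      refine ⟨fun i j hij => h1 i j hij, fun i j hij heq => ?_⟩
      by_contra hn
      exact h2 i j hij hn heq
  rw [h]
  refine MeasurableSet.inter ?_ ?_
  · exact .iInter fun i => .iInter fun j => .iInter fun _ =>
      measurableSet_le (measurable_pi_apply _) (measurable_pi_apply _)
  · exact .iInter fun i => .iInter fun j => .iInter fun _ => .iInter fun _ =>
      (measurableSet_eq_fun (f := fun a : Fin n → ℝ => a (s i))
        (g := fun a : Fin n → ℝ => a (s j)) (measurable_pi_apply _) (measurable_pi_apply _)).compl

lemma measurableSet_dperm_eq (s : Equiv.Perm (Fin n)) :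
    MeasurableSet {a : Fin n → ℝ | dperm a = s} := by
  have h : {a : Fin n → ℝ | dperm a = s} = {a : Fin n → ℝ | Tuple.sort a = Fin.revPerm.trans s} := by
    ext a
    simp only [Set.mem_setOf_eq]
    constructor
    · intro h
      refine Equiv.ext fun j => ?_
      have := congrArg (fun e : Equiv.Perm (Fin n) => e (Fin.rev j)) h
      simp only [dperm, Equiv.trans_apply, Fin.revPerm_apply, Fin.rev_rev] at this ⊢
      exact this
    · intro h
      refine Equiv.ext fun i => ?_
      simp [dperm, h]
  rw [h]; exact measurableSet_sort_eq _

lemma measurable_ascArr : Measurable (ascArr n) := by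
  rw [measurable_pi_iff]
  intro i
  have h : (fun a : Fin n → ℝ => ascArr n a i)
      = fun a => ∑ s : Equiv.Perm (Fin n),
          Set.indicator {a : Fin n → ℝ | Tuple.sort a = s} (fun a => a (s i)) a := by
    funext a
    rw [Finset.sum_eq_single (Tuple.sort a)]
    · simp [Set.indicator, ascArr]
    · intro s _ hs
      exact Set.indicator_of_notMem (fun h => hs (by simpa using h.symm)) _
    · simp
  rw [h]
  exact Finset.measurable_sum _ fun s _ =>
    (measurable_pi_apply _).indicator (measurableSet_sort_eq s)

lemma measurable_descArr : Measurable (descArr n) := by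
  rw [measurable_pi_iff]
  intro i
  exact (measurable_pi_apply i.rev).comp measurable_ascArr

lemma ascArr_comp_perm (a : Fin n → ℝ) (s : Equiv.Perm (Fin n)) :
    ascArr n (a ∘ s) = ascArr n a :=
  Tuple.comp_perm_comp_sort_eq_comp_sort (f := a) (σ := s)

lemma descArr_comp_perm (a : Fin n → ℝ) (s : Equiv.Perm (Fin n)) :
    descArr n (a ∘ s) = descArr n a := by
  funext i
  simp only [descArr, ascArr_comp_perm]

lemma descArr_eq_comp (a : Fin n → ℝ) : descArr n a = a ∘ (dperm a) := rfl

lemma descArr_descArr (a : Fin n → ℝ) : descArr n (descArr n a) = descArr n a := by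
  funext i
  have : ascArr n (descArr n a) = ascArr n a := by
    rw [descArr_eq_comp, ascArr_comp_perm]
  simp only [descArr, this]

lemma measurable_perm_apply {Ω : Type*} [MeasurableSpace Ω] {X : Ω → Fin n → ℝ}
    {σ : Ω → Equiv.Perm (Fin n)} (hX : Measurable X)
    (hσ : ∀ s : Equiv.Perm (Fin n), MeasurableSet {ω | σ ω = s}) :
    Measurable (fun ω i => X ω (σ ω i)) := by
  rw [measurable_pi_iff]
  intro i
  have h : (fun ω => X ω (σ ω i))
      = fun ω => ∑ s : Equiv.Perm (Fin n),
          Set.indicator {ω | σ ω = s} (fun ω => X ω (s i)) ω := by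
    funext ω
    rw [Finset.sum_eq_single (σ ω)]
    · simp [Set.indicator]
    · intro s _ hs
      exact Set.indicator_of_notMem (fun h => hs (by simpa using h.symm)) _
    · simp
  rw [h]
  exact Finset.measurable_sum _ fun s _ =>
    ((measurable_pi_apply (s i)).comp hX).indicator (hσ s)


lemma isRearrangement_iff_map_descArr (lam nu : Measure (Fin n → ℝ))
    [IsProbabilityMeasure lam] [IsProbabilityMeasure nu] :
    IsRearrangement n lam nu ↔ nu.map (descArr n) = lam.map (descArr n) := by
  constructor
  · rintro ⟨Ω, mΩ, P, hP, X', σ, hX', hσ, hmapX, hmapXσ⟩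
    have hm : Measurable fun ω i => X' ω (σ ω i) := measurable_perm_apply hX' hσ
    have key : (descArr n ∘ fun ω i => X' ω (σ ω i)) = descArr n ∘ X' := by
      funext ω
      exact descArr_comp_perm (X' ω) (σ ω)
    rw [← hmapXσ, ← hmapX, Measure.map_map measurable_descArr hm,
      Measure.map_map measurable_descArr hX', key]
  · intro h
    classical
    set pair : (Fin n → ℝ) → (Fin n → ℝ) × (Fin n → ℝ) := fun x => (descArr n x, x) with hpair
    have hpairm : Measurable pair := measurable_descArr.prodMk measurable_id
    set μ' : Measure ((Fin n → ℝ) × (Fin n → ℝ)) := lam.map pair with hμ'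
    set ν' : Measure ((Fin n → ℝ) × (Fin n → ℝ)) := nu.map pair with hν'
    have hμ'p : IsProbabilityMeasure μ' := Measure.isProbabilityMeasure_map hpairm.aemeasurable
    have hν'p : IsProbabilityMeasure ν' := Measure.isProbabilityMeasure_map hpairm.aemeasurable
    have hfst : μ'.fst = lam.map (descArr n) := by
      rw [hμ', Measure.fst, Measure.map_map measurable_fst hpairm]
      rfl
    have hfstν : ν'.fst = nu.map (descArr n) := by
      rw [hν', Measure.fst, Measure.map_map measurable_fst hpairm]
      rfl
    have hmeq : ν'.fst = μ'.fst := by rw [hfstν, h, ← hfst]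
    set κ := μ'.condKernel with hκ
    set κ' := ν'.condKernel with hκ'
    set P : Measure ((Fin n → ℝ) × (Fin n → ℝ) × (Fin n → ℝ)) := μ'.fst ⊗ₘ (κ ×ₖ κ')
      with hPdef
    have hPprob : IsProbabilityMeasure P := by
      have : IsMarkovKernel κ' := by rw [hκ']; infer_instance
      infer_instance
    have hms1 : Measurable fun ω : (Fin n → ℝ) × (Fin n → ℝ) × (Fin n → ℝ) => (ω.1, ω.2.1) :=
      measurable_fst.prodMk measurable_snd.fst
    have hms2 : Measurable fun ω : (Fin n → ℝ) × (Fin n → ℝ) × (Fin n → ℝ) => (ω.1, ω.2.2) :=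
      measurable_fst.prodMk measurable_snd.snd
    have hjoint1 : P.map (fun ω : (Fin n → ℝ) × (Fin n → ℝ) × (Fin n → ℝ) => (ω.1, ω.2.1)) = μ' := by
      conv_rhs => rw [← μ'.disintegrate μ'.condKernel]
      ext t ht
      rw [Measure.map_apply hms1 ht, hPdef, Measure.compProd_apply (hms1 ht),
        Measure.compProd_apply ht]
      refine lintegral_congr fun d => ?_
      have hset : (Prod.mk d ⁻¹'
            ((fun ω : (Fin n → ℝ) × (Fin n → ℝ) × (Fin n → ℝ) => (ω.1, ω.2.1)) ⁻¹' t))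
          = (Prod.mk d ⁻¹' t) ×ˢ Set.univ := by
        ext xy
        simp [Set.mem_prod]
      rw [hset, Kernel.prod_apply, Measure.prod_prod, measure_univ, mul_one]
    have hjoint2 : P.map (fun ω : (Fin n → ℝ) × (Fin n → ℝ) × (Fin n → ℝ) => (ω.1, ω.2.2)) = ν' := by
      conv_rhs => rw [← ν'.disintegrate ν'.condKernel, hmeq]
      ext t ht
      rw [Measure.map_apply hms2 ht, hPdef, Measure.compProd_apply (hms2 ht),
        Measure.compProd_apply ht]
      refine lintegral_congr fun d => ?_
      have hset : (Prod.mk d ⁻¹'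
            ((fun ω : (Fin n → ℝ) × (Fin n → ℝ) × (Fin n → ℝ) => (ω.1, ω.2.2)) ⁻¹' t))
          = Set.univ ×ˢ (Prod.mk d ⁻¹' t) := by
        ext xy
        simp [Set.mem_prod]
      rw [hset, Kernel.prod_apply, Measure.prod_prod, measure_univ, one_mul]
    have hXlaw : P.map (fun ω : (Fin n → ℝ) × (Fin n → ℝ) × (Fin n → ℝ) => ω.2.1) = lam := by
      have h1 : (fun ω : (Fin n → ℝ) × (Fin n → ℝ) × (Fin n → ℝ) => ω.2.1)
          = Prod.snd ∘ (fun ω : (Fin n → ℝ) × (Fin n → ℝ) × (Fin n → ℝ) => (ω.1, ω.2.1)) := rfl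
      have h2 : (Prod.snd ∘ pair) = id := rfl
      rw [h1, ← Measure.map_map measurable_snd hms1, hjoint1, hμ',
        Measure.map_map measurable_snd hpairm, h2, Measure.map_id]
    have hYlaw : P.map (fun ω : (Fin n → ℝ) × (Fin n → ℝ) × (Fin n → ℝ) => ω.2.2) = nu := by
      have h1 : (fun ω : (Fin n → ℝ) × (Fin n → ℝ) × (Fin n → ℝ) => ω.2.2)
          = Prod.snd ∘ (fun ω : (Fin n → ℝ) × (Fin n → ℝ) × (Fin n → ℝ) => (ω.1, ω.2.2)) := rfl
      have h2 : (Prod.snd ∘ pair) = id := rfl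
      rw [h1, ← Measure.map_map measurable_snd hms2, hjoint2, hν',
        Measure.map_map measurable_snd hpairm, h2, Measure.map_id]
    have hA : MeasurableSet {p : (Fin n → ℝ) × (Fin n → ℝ) | p.1 = descArr n p.2} := by
      have hset : {p : (Fin n → ℝ) × (Fin n → ℝ) | p.1 = descArr n p.2}
          = ⋂ i, {p : (Fin n → ℝ) × (Fin n → ℝ) | p.1 i = descArr n p.2 i} := by
        ext p
        simp [funext_iff]
      rw [hset]
      exact .iInter fun i => measurableSet_eq_fun
        (measurable_fst.eval)
        ((measurable_descArr.comp measurable_snd).eval)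
    have hμ'A : μ' {p : (Fin n → ℝ) × (Fin n → ℝ) | p.1 = descArr n p.2} = 1 := by
      rw [hμ', Measure.map_apply hpairm hA]
      have : pair ⁻¹' {p : (Fin n → ℝ) × (Fin n → ℝ) | p.1 = descArr n p.2} = Set.univ := by
        ext x
        simp [hpair]
      rw [this, measure_univ]
    have hν'A : ν' {p : (Fin n → ℝ) × (Fin n → ℝ) | p.1 = descArr n p.2} = 1 := by
      rw [hν', Measure.map_apply hpairm hA]
      have : pair ⁻¹' {p : (Fin n → ℝ) × (Fin n → ℝ) | p.1 = descArr n p.2} = Set.univ := by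
        ext x
        simp [hpair]
      rw [this, measure_univ]
    have hae1 : ∀ᵐ ω : (Fin n → ℝ) × (Fin n → ℝ) × (Fin n → ℝ) ∂P, ω.1 = descArr n ω.2.1 := by
      have hPA : P ((fun ω : (Fin n → ℝ) × (Fin n → ℝ) × (Fin n → ℝ) => (ω.1, ω.2.1)) ⁻¹'
          {p : (Fin n → ℝ) × (Fin n → ℝ) | p.1 = descArr n p.2}) = 1 := by
        rw [← Measure.map_apply hms1 hA, hjoint1, hμ'A]
      rw [ae_iff]
      have : {ω : (Fin n → ℝ) × (Fin n → ℝ) × (Fin n → ℝ) | ¬ ω.1 = descArr n ω.2.1}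
          = ((fun ω : (Fin n → ℝ) × (Fin n → ℝ) × (Fin n → ℝ) => (ω.1, ω.2.1)) ⁻¹'
            {p : (Fin n → ℝ) × (Fin n → ℝ) | p.1 = descArr n p.2})ᶜ := rfl
      rw [this, prob_compl_eq_zero_iff (hms1 hA)]
      exact hPA
    have hae2 : ∀ᵐ ω : (Fin n → ℝ) × (Fin n → ℝ) × (Fin n → ℝ) ∂P, ω.1 = descArr n ω.2.2 := by
      have hPA : P ((fun ω : (Fin n → ℝ) × (Fin n → ℝ) × (Fin n → ℝ) => (ω.1, ω.2.2)) ⁻¹'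
          {p : (Fin n → ℝ) × (Fin n → ℝ) | p.1 = descArr n p.2}) = 1 := by
        rw [← Measure.map_apply hms2 hA, hjoint2, hν'A]
      rw [ae_iff]
      have : {ω : (Fin n → ℝ) × (Fin n → ℝ) × (Fin n → ℝ) | ¬ ω.1 = descArr n ω.2.2}
          = ((fun ω : (Fin n → ℝ) × (Fin n → ℝ) × (Fin n → ℝ) => (ω.1, ω.2.2)) ⁻¹'
            {p : (Fin n → ℝ) × (Fin n → ℝ) | p.1 = descArr n p.2})ᶜ := rfl
      rw [this, prob_compl_eq_zero_iff (hms2 hA)]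
      exact hPA
    refine ⟨(Fin n → ℝ) × (Fin n → ℝ) × (Fin n → ℝ), inferInstance, P, hPprob,
      (fun ω => ω.2.1), (fun ω => ((dperm ω.2.2)⁻¹).trans (dperm ω.2.1)),
      measurable_snd.fst, ?_, hXlaw, ?_⟩
    · intro s
      have hset : {ω : (Fin n → ℝ) × (Fin n → ℝ) × (Fin n → ℝ) |
            ((dperm ω.2.2)⁻¹).trans (dperm ω.2.1) = s}
          = ⋃ v : Equiv.Perm (Fin n),
            ({ω : (Fin n → ℝ) × (Fin n → ℝ) × (Fin n → ℝ) | dperm ω.2.2 = v}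
              ∩ {ω : (Fin n → ℝ) × (Fin n → ℝ) × (Fin n → ℝ) | dperm ω.2.1 = v.trans s}) := by
        ext ω
        simp only [Set.mem_setOf_eq, Set.mem_iUnion, Set.mem_inter_iff]
        constructor
        · intro hs
          refine ⟨dperm ω.2.2, rfl, Equiv.ext fun j => ?_⟩
          have := congrArg (fun e : Equiv.Perm (Fin n) => e (dperm ω.2.2 j)) hs
          simpa using this
        · rintro ⟨v, hv, hu⟩
          refine Equiv.ext fun i => ?_
          simp [hv, hu]
      rw [hset]
      exact MeasurableSet.iUnion fun v =>
        ((measurable_snd.snd (measurableSet_dperm_eq v)).inter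
          (measurable_snd.fst (measurableSet_dperm_eq (v.trans s))))
    · have hfeq : (fun ω : (Fin n → ℝ) × (Fin n → ℝ) × (Fin n → ℝ) =>
            fun i => ω.2.1 (((dperm ω.2.2)⁻¹).trans (dperm ω.2.1) i))
          =ᵐ[P] (fun ω => ω.2.2) := by
        filter_upwards [hae1, hae2] with ω h1 h2
        funext i
        calc ω.2.1 (dperm ω.2.1 ((dperm ω.2.2)⁻¹ i))
            = descArr n ω.2.1 ((dperm ω.2.2)⁻¹ i) := (descArr_apply _ _).symm
          _ = descArr n ω.2.2 ((dperm ω.2.2)⁻¹ i) := by rw [← h1, h2]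
          _ = ω.2.2 i := (apply_dperm_inv _ _).symm
      rw [Measure.map_congr hfeq, hYlaw]


lemma measurable_revMap : Measurable (fun (v : Fin n → ℝ) (i : Fin n) => v i.rev) := by
  rw [measurable_pi_iff]
  intro i
  exact measurable_pi_apply _

/-- For sequences `X`, `Y` of real random variables whose entries almost surely have no
ties, the following are equivalent: (i) the law of `Y` is a rearrangement of the law of
`X`; (ii) `Y↓ =d X↓`; (iii) `Y↑ =d X↑`; (iv) the law of `Y` is a rearrangement of the law
of `X↓`. -/
theorem isRearrangement_tfae {n : ℕ}
    {Ω₁ : Type} [MeasurableSpace Ω₁] (P₁ : Measure Ω₁) [IsProbabilityMeasure P₁]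
    {Ω₂ : Type} [MeasurableSpace Ω₂] (P₂ : Measure Ω₂) [IsProbabilityMeasure P₂]
    (X : Ω₁ → Fin n → ℝ) (Y : Ω₂ → Fin n → ℝ)
    (hX : Measurable X) (hY : Measurable Y)
    (hXties : ∀ᵐ ω ∂P₁, ∀ i j : Fin n, i ≠ j → X ω i ≠ X ω j)
    (hYties : ∀ᵐ ω ∂P₂, ∀ i j : Fin n, i ≠ j → Y ω i ≠ Y ω j) :
    (IsRearrangement n (P₁.map X) (P₂.map Y)
        ↔ P₂.map (fun ω => descArr n (Y ω)) = P₁.map (fun ω => descArr n (X ω)))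
    ∧ (IsRearrangement n (P₁.map X) (P₂.map Y)
        ↔ P₂.map (fun ω => ascArr n (Y ω)) = P₁.map (fun ω => ascArr n (X ω)))
    ∧ (IsRearrangement n (P₁.map X) (P₂.map Y)
        ↔ IsRearrangement n (P₁.map (fun ω => descArr n (X ω))) (P₂.map Y)) := by
  have hlam : IsProbabilityMeasure (P₁.map X) := Measure.isProbabilityMeasure_map hX.aemeasurable
  have hnu : IsProbabilityMeasure (P₂.map Y) := Measure.isProbabilityMeasure_map hY.aemeasurable
  have hlam' : IsProbabilityMeasure (P₁.map (fun ω => descArr n (X ω))) :=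
    Measure.isProbabilityMeasure_map (measurable_descArr.comp hX).aemeasurable
  have hmm1 : P₂.map (fun ω => descArr n (Y ω)) = (P₂.map Y).map (descArr n) :=
    (Measure.map_map measurable_descArr hY).symm
  have hmm2 : P₁.map (fun ω => descArr n (X ω)) = (P₁.map X).map (descArr n) :=
    (Measure.map_map measurable_descArr hX).symm
  have key : IsRearrangement n (P₁.map X) (P₂.map Y)
      ↔ P₂.map (fun ω => descArr n (Y ω)) = P₁.map (fun ω => descArr n (X ω)) := by
    rw [isRearrangement_iff_map_descArr, ← hmm1, ← hmm2]
  have e1 : ∀ {Ω : Type} [MeasurableSpace Ω] (P : Measure Ω) (Z : Ω → Fin n → ℝ),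
      Measurable Z → P.map (fun ω => descArr n (Z ω))
        = (P.map (fun ω => ascArr n (Z ω))).map (fun (v : Fin n → ℝ) i => v i.rev) := by
    intro Ω mΩ P Z hZ
    have hcm : Measurable fun ω => ascArr n (Z ω) := measurable_ascArr.comp hZ
    rw [Measure.map_map measurable_revMap hcm]
    rfl
  have e2 : ∀ {Ω : Type} [MeasurableSpace Ω] (P : Measure Ω) (Z : Ω → Fin n → ℝ),
      Measurable Z → P.map (fun ω => ascArr n (Z ω))
        = (P.map (fun ω => descArr n (Z ω))).map (fun (v : Fin n → ℝ) i => v i.rev) := by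
    intro Ω mΩ P Z hZ
    have hcm : Measurable fun ω => descArr n (Z ω) := measurable_descArr.comp hZ
    rw [Measure.map_map measurable_revMap hcm]
    congr 1
    funext ω i
    simp [Function.comp, descArr, Fin.rev_rev]
  refine ⟨key, key.trans ⟨fun hd => ?_, fun ha => ?_⟩, key.trans ?_⟩
  · rw [e2 P₂ Y hY, e2 P₁ X hX, hd]
  · rw [e1 P₂ Y hY, e1 P₁ X hX, ha]
  · have hidem : (P₁.map (fun ω => descArr n (X ω))).map (descArr n)
        = P₁.map (fun ω => descArr n (X ω)) := by
      have hcm : Measurable fun ω => descArr n (X ω) := measurable_descArr.comp hX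
      rw [Measure.map_map measurable_descArr hcm]
      congr 1
      funext ω
      exact descArr_descArr (X ω)
    rw [isRearrangement_iff_map_descArr, ← hmm1, hidem]
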